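/- Let k = q_1^(a_1) · q_2^(a_2) · ... · q_r^(a_r) be the prime factorization of k with distinct primes q_i and a_i ≥ 1. Then for all n ≥ 1 and m ≥ 1, S_n(m + q_1^(a_1+1)·q_2^(a_2+1)···q_r^(a_r+1)) ≡ S_n(m) (mod k). -/

import Mathlib

def S (n m : ℕ) : ℕ := ∑ i ∈ Finset.Icc 1 m, i ^ n

/-- Sum of n-th powers over any interval of length `L` is congruent, mod any
divisor `M` of `L`, to the sum over `range L`. -/
lemma lemB (M L n : ℕ) (h : M ∣ L) :
    ∀ c, (∑ i ∈ Finset.Ico c (c + L), i ^ n) ≡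
      (∑ i ∈ Finset.range L, i ^ n) [MOD M] := by
  intro c
  induction c with
  | zero => rw [Finset.range_eq_Ico, Nat.zero_add]
  | succ c ih =>
    rcases Nat.eq_zero_or_pos L with hL | hL
    · subst hL; simp; rfl
    have h1 : (∑ i ∈ Finset.Ico c (c + L), i ^ n) =
        c ^ n + ∑ i ∈ Finset.Ico (c + 1) (c + L), i ^ n :=
      Finset.sum_eq_sum_Ico_succ_bot (by omega) _
    have h2 : (∑ i ∈ Finset.Ico (c + 1) (c + 1 + L), i ^ n) =
        (∑ i ∈ Finset.Ico (c + 1) (c + L), i ^ n) + (c + L) ^ n := by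
      have : c + 1 + L = (c + L) + 1 := by omega
      rw [this, Finset.sum_Ico_succ_top (by omega)]
    have hcl : (c + L) ^ n ≡ c ^ n [MOD M] := by
      have : c + L ≡ c + 0 [MOD M] :=
        Nat.ModEq.add_left c ((Nat.modEq_zero_iff_dvd).mpr h)
      simpa using this.pow n
    have key : (∑ i ∈ Finset.Ico (c + 1) (c + 1 + L), i ^ n) + c ^ n ≡
        (∑ i ∈ Finset.range L, i ^ n) + c ^ n [MOD M] := by
      calc (∑ i ∈ Finset.Ico (c + 1) (c + 1 + L), i ^ n) + c ^ n
          = (∑ i ∈ Finset.Ico c (c + L), i ^ n) + (c + L) ^ n := by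
            rw [h1, h2]; ring
        _ ≡ (∑ i ∈ Finset.range L, i ^ n) + c ^ n [MOD M] := ih.add hcl
    exact key.add_right_cancel' _

/-- Sum over `range (N * t)` is `t` copies of the sum over `range N`, mod `N`. -/
lemma lemE (N n : ℕ) : ∀ t, (∑ i ∈ Finset.range (N * t), i ^ n) ≡
    t * (∑ i ∈ Finset.range N, i ^ n) [MOD N] := by
  intro t
  induction t with
  | zero => simp; rfl
  | succ t ih =>
    have hsplit : (∑ i ∈ Finset.range (N * (t + 1)), i ^ n) =
        (∑ i ∈ Finset.range (N * t), i ^ n) +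
          ∑ i ∈ Finset.Ico (N * t) (N * t + N), i ^ n := by
      rw [Finset.range_eq_Ico, Finset.range_eq_Ico,
        show N * (t + 1) = N * t + N from by ring]
      exact (Finset.sum_Ico_consecutive (fun i => i ^ n) (Nat.zero_le _)
        (Nat.le_add_right _ _)).symm
    rw [hsplit]
    have hb := lemB N N n dvd_rfl (N * t)
    calc (∑ i ∈ Finset.range (N * t), i ^ n) +
          ∑ i ∈ Finset.Ico (N * t) (N * t + N), i ^ n
        ≡ t * (∑ i ∈ Finset.range N, i ^ n) +
            (∑ i ∈ Finset.range N, i ^ n) [MOD N] := ih.add hb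
      _ = (t + 1) * (∑ i ∈ Finset.range N, i ^ n) := by ring

/-- `q^b` divides the sum of `n`-th powers over `range (q^(b+1))`. -/
lemma lemA (q n : ℕ) : ∀ b, q ^ b ∣ ∑ i ∈ Finset.range (q ^ (b + 1)), i ^ n := by
  intro b
  induction b with
  | zero => simp
  | succ b ih =>
    have h1 : q ^ (b + 2) = q ^ (b + 1) * q := by ring
    have h2 := lemE (q ^ (b + 1)) n q
    rw [h1]
    have h3 : q ^ (b + 1) ∣ q * (∑ i ∈ Finset.range (q ^ (b + 1)), i ^ n) := by
      obtain ⟨e, he⟩ := ih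
      exact ⟨e, by rw [he]; ring⟩
    have h4 : (∑ i ∈ Finset.range (q ^ (b + 1) * q), i ^ n) ≡ 0 [MOD q ^ (b + 1)] := by
      calc (∑ i ∈ Finset.range (q ^ (b + 1) * q), i ^ n)
          ≡ q * (∑ i ∈ Finset.range (q ^ (b + 1)), i ^ n) [MOD q ^ (b + 1)] := h2
        _ ≡ 0 [MOD q ^ (b + 1)] := (Nat.modEq_zero_iff_dvd).mpr h3
    exact (Nat.modEq_zero_iff_dvd).mp h4

/-- `q^b` divides the sum of `n`-th powers over any interval whose length is a
multiple of `q^(b+1)`. -/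
lemma lemC (q b s n c : ℕ) :
    q ^ b ∣ ∑ i ∈ Finset.Ico c (c + q ^ (b + 1) * s), i ^ n := by
  have hb := lemB (q ^ (b + 1)) (q ^ (b + 1) * s) n (Dvd.intro s rfl) c
  have hb' : (∑ i ∈ Finset.Ico c (c + q ^ (b + 1) * s), i ^ n) ≡
      (∑ i ∈ Finset.range (q ^ (b + 1) * s), i ^ n) [MOD q ^ b] :=
    hb.of_dvd (pow_dvd_pow q (Nat.le_succ b))
  have he : (∑ i ∈ Finset.range (q ^ (b + 1) * s), i ^ n) ≡
      s * (∑ i ∈ Finset.range (q ^ (b + 1)), i ^ n) [MOD q ^ b] :=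
    (lemE (q ^ (b + 1)) n s).of_dvd (pow_dvd_pow q (Nat.le_succ b))
  have hd : q ^ b ∣ s * (∑ i ∈ Finset.range (q ^ (b + 1)), i ^ n) :=
    Dvd.dvd.mul_left (lemA q n b) s
  have : (∑ i ∈ Finset.Ico c (c + q ^ (b + 1) * s), i ^ n) ≡ 0 [MOD q ^ b] :=
    (hb'.trans he).trans ((Nat.modEq_zero_iff_dvd).mpr hd)
  exact (Nat.modEq_zero_iff_dvd).mp this

theorem stmt19 (k : ℕ) (hk : 2 ≤ k) (n m : ℕ) (hn : 1 ≤ n) (hm : 1 ≤ m) :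
    S n (m + ∏ p ∈ k.factorization.support, p ^ (k.factorization p + 1)) ≡
      S n m [MOD k] := by
  set T : ℕ := ∏ p ∈ k.factorization.support, p ^ (k.factorization p + 1) with hT
  set D : ℕ := ∑ i ∈ Finset.Ico (m + 1) (m + 1 + T), i ^ n with hD
  have hk0 : k ≠ 0 := by omega
  have hTpos : 0 < T := by
    apply Finset.prod_pos
    intro p hp
    have hp' : p.Prime := Nat.prime_of_mem_primeFactors (by
      rwa [Nat.support_factorization] at hp)
    exact pow_pos hp'.pos _
  -- split the sum
  have hsplit : S n (m + T) = S n m + D := by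
    have h1 : (∑ i ∈ Finset.Icc 1 m, i ^ n) + (∑ i ∈ Finset.Ioc m (m + T), i ^ n) =
        ∑ i ∈ Finset.Icc 1 (m + T), i ^ n := by
      rw [show (Finset.Icc 1 m : Finset ℕ) = Finset.Ioc 0 m by
            rw [← Finset.Icc_add_one_left_eq_Ioc, Nat.zero_add],
          show (Finset.Icc 1 (m + T) : Finset ℕ) = Finset.Ioc 0 (m + T) by
            rw [← Finset.Icc_add_one_left_eq_Ioc, Nat.zero_add]]
      exact Finset.sum_Ioc_consecutive _ (Nat.zero_le m) (Nat.le_add_right m T)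
    have h2 : (Finset.Ioc m (m + T) : Finset ℕ) = Finset.Ico (m + 1) (m + 1 + T) := by
      rw [show m + 1 + T = (m + T) + 1 by omega, Finset.Ico_add_one_right_eq_Icc, Finset.Icc_add_one_left_eq_Ioc]
    rw [S, S, ← h1, h2]
  -- D is positive
  have hDpos : 0 < D := by
    rw [hD]
    apply Finset.sum_pos
    · intro i hi
      rw [Finset.mem_Ico] at hi
      exact pow_pos (by omega) n
    · rw [Finset.nonempty_Ico]; omega
  -- k divides D
  have hkD : k ∣ D := by
    rw [← Nat.factorization_le_iff_dvd hk0 hDpos.ne']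
    intro p
    rcases Nat.eq_zero_or_pos (k.factorization p) with h0 | hpos
    · simp [h0]
    · have hps : p ∈ k.factorization.support := by
        rw [Finsupp.mem_support_iff]; omega
      have hp' : p.Prime := Nat.prime_of_mem_primeFactors (by
        rwa [Nat.support_factorization] at hps)
      have hdvdT : p ^ (k.factorization p + 1) ∣ T :=
        Finset.dvd_prod_of_mem _ hps
      obtain ⟨s, hs⟩ := hdvdT
      have : p ^ (k.factorization p) ∣ D := by
        rw [hD, hs]
        exact lemC p (k.factorization p) s n (m + 1)
      exact (Nat.Prime.pow_dvd_iff_le_factorization hp' hDpos.ne').mp this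
  calc S n (m + T) = S n m + D := hsplit
    _ ≡ S n m + 0 [MOD k] :=
        (Nat.ModEq.refl (S n m)).add ((Nat.modEq_zero_iff_dvd).mpr hkD)
    _ = S n m := by omega
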